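/- Flow invariance of a closed set under a locally Lipschitz differential inclusion with subtangential values (continuous-time core of the proof of Theorem 4.2): Let C ⊆ ℝⁿ be closed, let K ⊆ ℝⁿ be such that S := K ∩ C is nonempty and closed, and let F : ℝⁿ ⇉ ℝⁿ be locally Lipschitz on C and satisfy F(x) ⊆ T_S(x) for every x ∈ ∂S. If z : [a,b] → ℝⁿ is absolutely continuous with z(t) ∈ C for all t ∈ [a,b], z'(t) ∈ F(z(t)) for almost every t ∈ [a,b], and z(a) ∈ S, then z(t) ∈ S for every t ∈ [a,b]. -/

import Mathlib

open Set Filter MeasureTheory Metric Topology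

noncomputable section

namespace Hybrid

/-- The state space `ℝⁿ`. -/
abbrev E (n : ℕ) : Type := EuclideanSpace ℝ (Fin n)

/-! ## Hybrid time domains -/

/-- A compact hybrid time domain: `∪_{j=0}^{J-1} [t_j, t_{j+1}] × {j}` for a finite
nondecreasing sequence of times `0 = t_0 ≤ t_1 ≤ … ≤ t_J`. -/
def IsCompactHybridTimeDomain (S : Set (ℝ × ℕ)) : Prop :=
  ∃ (J : ℕ) (t : ℕ → ℝ), t 0 = 0 ∧ (∀ j, j < J → t j ≤ t (j + 1)) ∧
    S = ⋃ j ∈ Finset.range J, Set.Icc (t j) (t (j + 1)) ×ˢ ({j} : Set ℕ)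

/-- A hybrid time domain: each truncation `S ∩ ([0,T] × {0,…,J})`, `(T,J) ∈ S`, is a
compact hybrid time domain. -/
def IsHybridTimeDomain (S : Set (ℝ × ℕ)) : Prop :=
  ∀ p ∈ S, IsCompactHybridTimeDomain (S ∩ (Set.Icc 0 p.1 ×ˢ Set.Iic p.2))

/-- The slice `I^j = {t : (t,j) ∈ dom}` of a hybrid time domain. -/
def Ij (dom : Set (ℝ × ℕ)) (j : ℕ) : Set ℝ := {t | (t, j) ∈ dom}

/-- `T`, the supremum of the ordinary-time component of a hybrid time domain. -/
def supT (dom : Set (ℝ × ℕ)) : ℝ := sSup (Prod.fst '' dom)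

/-- `J`, the supremum of the jump component of a hybrid time domain. -/
def supJ (dom : Set (ℝ × ℕ)) : ℕ := sSup (Prod.snd '' dom)

/-- A hybrid time domain is unbounded (the corresponding solution is complete). -/
def IsCompleteDom (dom : Set (ℝ × ℕ)) : Prop := ∀ M : ℝ, ∃ p ∈ dom, M < p.1 + (p.2 : ℝ)

/-- The domain contains at least two points (the corresponding solution is nontrivial). -/
def NontrivialDom (dom : Set (ℝ × ℕ)) : Prop := ∃ p ∈ dom, ∃ q ∈ dom, p ≠ q

/-! ## Absolute continuity -/

/-- Absolute continuity of `f` on a set `s ⊆ ℝ`, via the classical ε-δ definition over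
finite families of nonoverlapping intervals with endpoints in `s`. -/
def AbsolutelyContinuousOn {X : Type*} [NormedAddCommGroup X] (f : ℝ → X) (s : Set ℝ) :
    Prop :=
  ∀ ε > (0:ℝ), ∃ δ > (0:ℝ), ∀ (m : ℕ) (a b : ℕ → ℝ),
    (∀ i < m, a i ∈ s ∧ b i ∈ s ∧ a i ≤ b i) →
    (∀ i < m, ∀ j < m, i ≠ j → Disjoint (Set.Ioo (a i) (b i)) (Set.Ioo (a j) (b j))) →
    ∑ i ∈ Finset.range m, (b i - a i) < δ →
    ∑ i ∈ Finset.range m, ‖f (b i) - f (a i)‖ < ε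

/-- Local absolute continuity on `s`: absolute continuity on `s ∩ [a,b]` for every compact
interval `[a,b]`. -/
def LocAbsolutelyContinuousOn {X : Type*} [NormedAddCommGroup X] (f : ℝ → X) (s : Set ℝ) :
    Prop :=
  ∀ a b : ℝ, AbsolutelyContinuousOn f (s ∩ Set.Icc a b)

/-! ## Hybrid arcs and hybrid disturbances -/

/-- A hybrid arc: a function on a hybrid time domain that is locally absolutely continuous
in `t` on each slice `I^j`. -/
def IsHybridArc {n : ℕ} (dom : Set (ℝ × ℕ)) (φ : ℝ → ℕ → E n) : Prop :=
  IsHybridTimeDomain dom ∧ ∀ j, LocAbsolutelyContinuousOn (fun t => φ t j) (Ij dom j)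

/-- A hybrid disturbance with values in `W`: Lebesgue measurable and locally essentially
bounded in `t` on each slice `I^j`. -/
def IsHybridDisturbance {d : ℕ} (W : Set (E d)) (dom : Set (ℝ × ℕ)) (w : ℝ → ℕ → E d) :
    Prop :=
  IsHybridTimeDomain dom ∧ (∀ p ∈ dom, w p.1 p.2 ∈ W) ∧
    ∀ j, AEMeasurable (fun t => w t j) (volume.restrict (Ij dom j)) ∧
      ∀ a b : ℝ, ∃ M : ℝ,
        ∀ᵐ t ∂(volume.restrict (Ij dom j ∩ Set.Icc a b)), ‖w t j‖ ≤ M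

/-- `rge φ ⊆ K`. -/
def RangeIn {n : ℕ} (dom : Set (ℝ × ℕ)) (φ : ℝ → ℕ → E n) (K : Set (E n)) : Prop :=
  ∀ p ∈ dom, φ p.1 p.2 ∈ K

/-! ## Tangent cones -/

/-- The (Bouligand) tangent cone to `S` at `x`:
`T_S(x) = {ω : liminf_{τ↘0} dist(x+τω,S)/τ = 0}`. -/
def tangentCone {n : ℕ} (S : Set (E n)) (x : E n) : Set (E n) :=
  {ω | Filter.liminf (fun τ : ℝ => Metric.infDist (x + τ • ω) S / τ) (𝓝[>] (0:ℝ)) = 0}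

/-- The Clarke tangent cone to `S` at `x`. -/
def clarkeTangentCone {n : ℕ} (S : Set (E n)) (x : E n) : Set (E n) :=
  {v | ∀ (xs : ℕ → E n) (τ : ℕ → ℝ), (∀ i, xs i ∈ S) → Tendsto xs atTop (𝓝 x) →
    (∀ i, 0 < τ i) → Tendsto τ atTop (𝓝 (0:ℝ)) →
    ∃ vs : ℕ → E n, Tendsto vs atTop (𝓝 v) ∧ ∀ i, xs i + τ i • vs i ∈ S}

/-! ## Regularity notions for set-valued maps -/

/-- Outer semicontinuity of a set-valued map relative to a set `A`. -/
def OuterSemicontinuousRel {α β : Type*} [TopologicalSpace α] [TopologicalSpace β]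
    (F : α → Set β) (A : Set α) : Prop :=
  ∀ (x : ℕ → α) (y : ℕ → β) (x₀ : α) (y₀ : β), (∀ i, x i ∈ A) → x₀ ∈ A →
    Tendsto x atTop (𝓝 x₀) → (∀ i, y i ∈ F (x i)) → Tendsto y atTop (𝓝 y₀) → y₀ ∈ F x₀

/-- Local boundedness of a set-valued map relative to a set `A`. -/
def LocallyBoundedRel {α β : Type*} [TopologicalSpace α] [Bornology β]
    (F : α → Set β) (A : Set α) : Prop :=
  ∀ x ∈ A, ∃ U ∈ 𝓝 x, Bornology.IsBounded (⋃ y ∈ U ∩ A, F y)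

/-- A set-valued map `F` is locally Lipschitz on `C`:
`F(x₁) ⊆ F(x₂) + λ‖x₁−x₂‖𝔹` locally. -/
def SetValuedLocallyLipschitzOn {n : ℕ} (F : E n → Set (E n)) (C : Set (E n)) : Prop :=
  ∀ x ∈ C, ∃ U ∈ 𝓝 x, ∃ lam : ℝ, 0 ≤ lam ∧
    ∀ x₁ ∈ U ∩ C, ∀ x₂ ∈ U ∩ C, ∀ v ∈ F x₁, ∃ u ∈ F x₂, ‖v - u‖ ≤ lam * ‖x₁ - x₂‖

/-- Linear growth of a set-valued map on a set `A`. -/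
def LinearGrowthOn {n : ℕ} (F : E n → Set (E n)) (A : Set (E n)) : Prop :=
  ∃ c > (0:ℝ), ∀ x ∈ A, ∀ v ∈ F x, ‖v‖ ≤ c * (‖x‖ + 1)

/-! ## Nominal hybrid systems H = (C,F,D,G) -/

/-- A solution `φ` (with domain `dom`) to the hybrid system `H = (C,F,D,G)`. -/
def IsSolution {n : ℕ} (C : Set (E n)) (F : E n → Set (E n)) (D : Set (E n))
    (G : E n → Set (E n)) (dom : Set (ℝ × ℕ)) (φ : ℝ → ℕ → E n) : Prop :=
  IsHybridArc dom φ ∧ (0, 0) ∈ dom ∧ φ 0 0 ∈ closure C ∪ D ∧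
  (∀ j, (interior (Ij dom j)).Nonempty →
    (∀ t ∈ interior (Ij dom j), φ t j ∈ C) ∧
    ∀ᵐ t ∂(volume.restrict (Ij dom j)),
      ∃ v ∈ F (φ t j), HasDerivWithinAt (fun s => φ s j) v (Ij dom j) t) ∧
  (∀ t j, (t, j) ∈ dom → (t, j + 1) ∈ dom → φ t j ∈ D ∧ φ t (j + 1) ∈ G (φ t j))

/-- A maximal solution to `H`: not a truncation of another solution to a proper subset
of that solution's domain. -/
def IsMaximalSolution {n : ℕ} (C : Set (E n)) (F : E n → Set (E n)) (D : Set (E n))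
    (G : E n → Set (E n)) (dom : Set (ℝ × ℕ)) (φ : ℝ → ℕ → E n) : Prop :=
  IsSolution C F D G dom φ ∧
  ∀ dom' φ', IsSolution C F D G dom' φ' → dom ⊆ dom' →
    (∀ p ∈ dom, φ' p.1 p.2 = φ p.1 p.2) → dom' = dom

/-- Weak forward pre-invariance of `K` for `H`. -/
def WeaklyForwardPreInvariant {n : ℕ} (C : Set (E n)) (F : E n → Set (E n)) (D : Set (E n))
    (G : E n → Set (E n)) (K : Set (E n)) : Prop :=
  ∀ x ∈ K, ∃ dom φ, IsMaximalSolution C F D G dom φ ∧ φ 0 0 = x ∧ RangeIn dom φ K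

/-- Weak forward invariance of `K` for `H`. -/
def WeaklyForwardInvariant {n : ℕ} (C : Set (E n)) (F : E n → Set (E n)) (D : Set (E n))
    (G : E n → Set (E n)) (K : Set (E n)) : Prop :=
  ∀ x ∈ K, ∃ dom φ, IsMaximalSolution C F D G dom φ ∧ φ 0 0 = x ∧ IsCompleteDom dom ∧
    RangeIn dom φ K

/-- Forward pre-invariance of `K` for `H`. -/
def ForwardPreInvariant {n : ℕ} (C : Set (E n)) (F : E n → Set (E n)) (D : Set (E n))
    (G : E n → Set (E n)) (K : Set (E n)) : Prop :=
  ∀ dom φ, IsMaximalSolution C F D G dom φ → φ 0 0 ∈ K → RangeIn dom φ K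

/-- Forward invariance of `K` for `H`. -/
def ForwardInvariant {n : ℕ} (C : Set (E n)) (F : E n → Set (E n)) (D : Set (E n))
    (G : E n → Set (E n)) (K : Set (E n)) : Prop :=
  (∀ x ∈ K, ∃ dom φ, IsSolution C F D G dom φ ∧ φ 0 0 = x) ∧
  ∀ dom φ, IsMaximalSolution C F D G dom φ → φ 0 0 ∈ K →
    IsCompleteDom dom ∧ RangeIn dom φ K

/-- Assumption (data) for the nominal system. -/
def DataAssumption {n : ℕ} (K C D : Set (E n)) (F : E n → Set (E n)) : Prop :=
  K ⊆ closure C ∪ D ∧ IsClosed (K ∩ C) ∧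
  OuterSemicontinuousRel F (K ∩ C) ∧ LocallyBoundedRel F (K ∩ C) ∧
  ∀ x ∈ K ∩ C, (F x).Nonempty ∧ Convex ℝ (F x)

/-- The set `L = {x ∈ ∂C : F(x) ∩ T_{cl C}(x) = ∅}`. -/
def Lset {n : ℕ} (C : Set (E n)) (F : E n → Set (E n)) : Set (E n) :=
  {x | x ∈ frontier C ∧ F x ∩ tangentCone (closure C) x = ∅}

/-- The set `Ĉ = ∂(K ∩ C) \ L`. -/
def Chat {n : ℕ} (K C : Set (E n)) (F : E n → Set (E n)) : Set (E n) :=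
  frontier (K ∩ C) \ Lset C F

/-- Non-existence of an absolutely continuous extension of `t ↦ φ(t,J)` to `cl(I^J)`
satisfying the flow conditions (S1). -/
def NoFlowExtension {n : ℕ} (C : Set (E n)) (F : E n → Set (E n)) (dom : Set (ℝ × ℕ))
    (φ : ℝ → ℕ → E n) : Prop :=
  ¬ ∃ z : ℝ → E n,
      AbsolutelyContinuousOn z (closure (Ij dom (supJ dom))) ∧
      (∀ t ∈ Ij dom (supJ dom), z t = φ t (supJ dom)) ∧
      (∀ t ∈ interior (Ij dom (supJ dom)), z t ∈ C) ∧
      ∀ᵐ t ∂(volume.restrict (Ij dom (supJ dom))),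
        ∃ v ∈ F (z t), HasDerivWithinAt z v (closure (Ij dom (supJ dom))) t

/-- `φ` is not complete and ends with flow on a final interval open to the right, with no
absolutely continuous extension satisfying the flow conditions (case b.2). -/
def EndsWithUnextendableFlow {n : ℕ} (C : Set (E n)) (F : E n → Set (E n))
    (dom : Set (ℝ × ℕ)) (φ : ℝ → ℕ → E n) : Prop :=
  ¬ IsCompleteDom dom ∧ (supT dom, supJ dom) ∉ dom ∧
  (Ij dom (supJ dom)).Nonempty ∧ sSup (Ij dom (supJ dom)) ∉ Ij dom (supJ dom) ∧
  NoFlowExtension C F dom φ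

/-- Condition (N⋆), for the set `Kstar`, relative to the set `K`. -/
def NStar {n : ℕ} (C : Set (E n)) (F : E n → Set (E n)) (D : Set (E n))
    (G : E n → Set (E n)) (Kstar K : Set (E n)) : Prop :=
  ¬ ∃ dom φ, IsMaximalSolution C F D G dom φ ∧ φ 0 0 ∈ Kstar ∧ RangeIn dom φ K ∧
    EndsWithUnextendableFlow C F dom φ

/-! ## Hybrid systems with disturbances H_w = (C_w,F_w,D_w,G_w) -/

/-- Projection of `S ⊆ ℝⁿ × W` onto `ℝⁿ`. -/
def proj {n d : ℕ} (W : Set (E d)) (S : Set (E n × E d)) : Set (E n) :=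
  {x | ∃ w ∈ W, (x, w) ∈ S}

/-- `Ψ(x) = {w ∈ W : (x,w) ∈ S}`. -/
def Psi {n d : ℕ} (W : Set (E d)) (S : Set (E n × E d)) (x : E n) : Set (E d) :=
  {w | w ∈ W ∧ (x, w) ∈ S}

/-- A solution pair `(φ,(w_c,w_d))` to the hybrid system with disturbances
`H_w = (C_w,F_w,D_w,G_w)`. -/
def IsSolutionPair {n dc dd : ℕ} (Wc : Set (E dc)) (Wd : Set (E dd))
    (Cw : Set (E n × E dc)) (Fw : E n × E dc → Set (E n))
    (Dw : Set (E n × E dd)) (Gw : E n × E dd → Set (E n))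
    (dom : Set (ℝ × ℕ)) (φ : ℝ → ℕ → E n) (wc : ℝ → ℕ → E dc) (wd : ℝ → ℕ → E dd) :
    Prop :=
  IsHybridArc dom φ ∧ IsHybridDisturbance Wc dom wc ∧ IsHybridDisturbance Wd dom wd ∧
  (0, 0) ∈ dom ∧
  ((φ 0 0, wc 0 0) ∈ closure Cw ∨ (φ 0 0, wd 0 0) ∈ Dw) ∧
  (∀ j, (interior (Ij dom j)).Nonempty →
    (∀ t ∈ interior (Ij dom j), (φ t j, wc t j) ∈ Cw) ∧
    ∀ᵐ t ∂(volume.restrict (Ij dom j)),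
      ∃ v ∈ Fw (φ t j, wc t j), HasDerivWithinAt (fun s => φ s j) v (Ij dom j) t) ∧
  (∀ t j, (t, j) ∈ dom → (t, j + 1) ∈ dom →
    (φ t j, wd t j) ∈ Dw ∧ φ t (j + 1) ∈ Gw (φ t j, wd t j))

/-- A maximal solution pair to `H_w`. -/
def IsMaximalSolutionPair {n dc dd : ℕ} (Wc : Set (E dc)) (Wd : Set (E dd))
    (Cw : Set (E n × E dc)) (Fw : E n × E dc → Set (E n))
    (Dw : Set (E n × E dd)) (Gw : E n × E dd → Set (E n))
    (dom : Set (ℝ × ℕ)) (φ : ℝ → ℕ → E n) (wc : ℝ → ℕ → E dc) (wd : ℝ → ℕ → E dd) :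
    Prop :=
  IsSolutionPair Wc Wd Cw Fw Dw Gw dom φ wc wd ∧
  ∀ dom' φ' wc' wd', IsSolutionPair Wc Wd Cw Fw Dw Gw dom' φ' wc' wd' → dom ⊆ dom' →
    (∀ p ∈ dom, φ' p.1 p.2 = φ p.1 p.2 ∧ wc' p.1 p.2 = wc p.1 p.2 ∧
      wd' p.1 p.2 = wd p.1 p.2) →
    dom' = dom

/-- Robust weak forward pre-invariance of `K` for `H_w`. -/
def RobustlyWeaklyForwardPreInvariant {n dc dd : ℕ} (Wc : Set (E dc)) (Wd : Set (E dd))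
    (Cw : Set (E n × E dc)) (Fw : E n × E dc → Set (E n))
    (Dw : Set (E n × E dd)) (Gw : E n × E dd → Set (E n)) (K : Set (E n)) : Prop :=
  ∀ x ∈ K, ∃ dom φ wc wd, IsMaximalSolutionPair Wc Wd Cw Fw Dw Gw dom φ wc wd ∧
    φ 0 0 = x ∧ RangeIn dom φ K

/-- Robust weak forward invariance of `K` for `H_w`. -/
def RobustlyWeaklyForwardInvariant {n dc dd : ℕ} (Wc : Set (E dc)) (Wd : Set (E dd))
    (Cw : Set (E n × E dc)) (Fw : E n × E dc → Set (E n))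
    (Dw : Set (E n × E dd)) (Gw : E n × E dd → Set (E n)) (K : Set (E n)) : Prop :=
  ∀ x ∈ K, ∃ dom φ wc wd, IsMaximalSolutionPair Wc Wd Cw Fw Dw Gw dom φ wc wd ∧
    φ 0 0 = x ∧ IsCompleteDom dom ∧ RangeIn dom φ K

/-- Robust forward pre-invariance of `K` for `H_w`. -/
def RobustlyForwardPreInvariant {n dc dd : ℕ} (Wc : Set (E dc)) (Wd : Set (E dd))
    (Cw : Set (E n × E dc)) (Fw : E n × E dc → Set (E n))
    (Dw : Set (E n × E dd)) (Gw : E n × E dd → Set (E n)) (K : Set (E n)) : Prop :=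
  ∀ dom φ wc wd, IsMaximalSolutionPair Wc Wd Cw Fw Dw Gw dom φ wc wd → φ 0 0 ∈ K →
    RangeIn dom φ K

/-- Robust forward invariance of `K` for `H_w`. -/
def RobustlyForwardInvariant {n dc dd : ℕ} (Wc : Set (E dc)) (Wd : Set (E dd))
    (Cw : Set (E n × E dc)) (Fw : E n × E dc → Set (E n))
    (Dw : Set (E n × E dd)) (Gw : E n × E dd → Set (E n)) (K : Set (E n)) : Prop :=
  (∀ x ∈ K, ∃ dom φ wc wd, IsSolutionPair Wc Wd Cw Fw Dw Gw dom φ wc wd ∧ φ 0 0 = x) ∧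
  ∀ dom φ wc wd, IsMaximalSolutionPair Wc Wd Cw Fw Dw Gw dom φ wc wd → φ 0 0 ∈ K →
    IsCompleteDom dom ∧ RangeIn dom φ K

/-- Condition (VC_w) at `ξ`. -/
def VCw {n dc : ℕ} (Wc : Set (E dc)) (Cw : Set (E n × E dc))
    (Fw : E n × E dc → Set (E n)) (ξ : E n) : Prop :=
  ∃ ε > (0:ℝ), ∃ (z : ℝ → E n) (w : ℝ → E dc),
    AbsolutelyContinuousOn z (Set.Icc 0 ε) ∧ z 0 = ξ ∧
    AEMeasurable w (volume.restrict (Set.Icc (0:ℝ) ε)) ∧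
    (∃ M : ℝ, ∀ᵐ t ∂(volume.restrict (Set.Icc (0:ℝ) ε)), ‖w t‖ ≤ M) ∧
    (∀ t ∈ Set.Icc (0:ℝ) ε, w t ∈ Psi Wc Cw (z t)) ∧
    (∀ t ∈ Set.Ioo (0:ℝ) ε, (z t, w t) ∈ Cw) ∧
    ∀ᵐ t ∂(volume.restrict (Set.Icc (0:ℝ) ε)),
      ∃ v ∈ Fw (z t, w t), HasDerivWithinAt z v (Set.Icc 0 ε) t

/-- Assumption (wdata). -/
def WDataAssumption {n dc dd : ℕ} (K : Set (E n)) (Wc : Set (E dc)) (Wd : Set (E dd))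
    (Cw : Set (E n × E dc)) (Fw : E n × E dc → Set (E n)) (Dw : Set (E n × E dd)) :
    Prop :=
  K ⊆ closure (proj Wc Cw) ∪ proj Wd Dw ∧
  IsClosed (K ∩ proj Wc Cw) ∧
  OuterSemicontinuousRel Fw ((K ×ˢ Wc) ∩ Cw) ∧
  LocallyBoundedRel Fw ((K ×ˢ Wc) ∩ Cw) ∧
  (∀ p ∈ (K ×ˢ Wc) ∩ Cw, (Fw p).Nonempty ∧ Convex ℝ (Fw p)) ∧
  ∀ x ∈ proj Wc Cw, (0 : E dc) ∈ Psi Wc Cw x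

/-- Assumption (wbound). -/
def WBoundAssumption {n dc : ℕ} (K : Set (E n)) (Wc : Set (E dc))
    (Cw : Set (E n × E dc)) : Prop :=
  ∀ ξ ∈ frontier K ∩ proj Wc Cw, ∃ U ∈ 𝓝 ξ,
    ∀ x ∈ U ∩ proj Wc Cw, Psi Wc Cw x ⊆ Psi Wc Cw ξ

/-- `x ↦ F_w(x,w_c)` is locally Lipschitz uniformly in `w_c` on `C_w`. -/
def LocallyLipschitzUniform {n dc : ℕ} (Wc : Set (E dc)) (Cw : Set (E n × E dc))
    (Fw : E n × E dc → Set (E n)) : Prop :=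
  ∀ x ∈ proj Wc Cw, ∃ U ∈ 𝓝 x, ∃ lam : ℝ, 0 ≤ lam ∧
    ∀ x₁ ∈ U ∩ proj Wc Cw, ∀ x₂ ∈ U ∩ proj Wc Cw, ∀ w ∈ Wc,
      (x₁, w) ∈ Cw → (x₂, w) ∈ Cw →
      ∀ v ∈ Fw (x₁, w), ∃ u ∈ Fw (x₂, w), ‖v - u‖ ≤ lam * ‖x₁ - x₂‖

/-- The set `L_w`. -/
def Lw {n dc : ℕ} (Wc : Set (E dc)) (Cw : Set (E n × E dc))
    (Fw : E n × E dc → Set (E n)) : Set (E n × E dc) :=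
  {p | p ∈ Cw ∧ p.1 ∈ frontier (proj Wc Cw) ∧
    Fw p ∩ tangentCone (closure (proj Wc Cw)) p.1 = ∅}

/-- The set `Ĉ_w = ((∂(K ∩ Π_c(C_w)) × W_c) ∩ C_w) \ L_w`. -/
def ChatW {n dc : ℕ} (K : Set (E n)) (Wc : Set (E dc)) (Cw : Set (E n × E dc))
    (Fw : E n × E dc → Set (E n)) : Set (E n × E dc) :=
  ((frontier (K ∩ proj Wc Cw) ×ˢ Wc) ∩ Cw) \ Lw Wc Cw Fw

/-- Linear growth of `F_w` on a set `A ⊆ ℝⁿ × W_c`. -/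
def LinearGrowthOnW {n dc : ℕ} (Fw : E n × E dc → Set (E n)) (A : Set (E n × E dc)) :
    Prop :=
  ∃ c > (0:ℝ), ∀ p ∈ A, ∀ v ∈ Fw p, ‖v‖ ≤ c * (‖p.1‖ + 1)

/-- Non-existence of an absolutely continuous extension of `t ↦ φ(t,J)` to `cl(I^J)`,
with an admissible disturbance, satisfying the flow conditions (Sw1). -/
def NoFlowExtensionW {n dc : ℕ} (Wc : Set (E dc)) (Cw : Set (E n × E dc))
    (Fw : E n × E dc → Set (E n)) (dom : Set (ℝ × ℕ)) (φ : ℝ → ℕ → E n) : Prop :=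
  ¬ ∃ (z : ℝ → E n) (w : ℝ → E dc),
      AbsolutelyContinuousOn z (closure (Ij dom (supJ dom))) ∧
      AEMeasurable w (volume.restrict (closure (Ij dom (supJ dom)))) ∧
      (∃ M : ℝ, ∀ᵐ t ∂(volume.restrict (closure (Ij dom (supJ dom)))), ‖w t‖ ≤ M) ∧
      (∀ t ∈ closure (Ij dom (supJ dom)), w t ∈ Psi Wc Cw (z t)) ∧
      (∀ t ∈ Ij dom (supJ dom), z t = φ t (supJ dom)) ∧
      (∀ t ∈ interior (Ij dom (supJ dom)), (z t, w t) ∈ Cw) ∧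
      ∀ᵐ t ∂(volume.restrict (Ij dom (supJ dom))),
        ∃ v ∈ Fw (z t, w t), HasDerivWithinAt z v (closure (Ij dom (supJ dom))) t

/-- `(φ,w)` is not complete and ends with flow on a final interval open to the right,
with no absolutely continuous extension (case b.2 with disturbances). -/
def EndsWithUnextendableFlowW {n dc : ℕ} (Wc : Set (E dc)) (Cw : Set (E n × E dc))
    (Fw : E n × E dc → Set (E n)) (dom : Set (ℝ × ℕ)) (φ : ℝ → ℕ → E n) : Prop :=
  ¬ IsCompleteDom dom ∧ (supT dom, supJ dom) ∉ dom ∧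
  (Ij dom (supJ dom)).Nonempty ∧ sSup (Ij dom (supJ dom)) ∉ Ij dom (supJ dom) ∧
  NoFlowExtensionW Wc Cw Fw dom φ

/-- Condition (⋆), for the set `Ktil ⊆ ℝⁿ × W_c`, relative to the set `K`. -/
def StarCond {n dc dd : ℕ} (Wc : Set (E dc)) (Wd : Set (E dd))
    (Cw : Set (E n × E dc)) (Fw : E n × E dc → Set (E n))
    (Dw : Set (E n × E dd)) (Gw : E n × E dd → Set (E n))
    (Ktil : Set (E n × E dc)) (K : Set (E n)) : Prop :=
  ¬ ∃ dom φ wc wd, IsMaximalSolutionPair Wc Wd Cw Fw Dw Gw dom φ wc wd ∧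
    φ 0 0 ∈ proj Wc Ktil ∧ RangeIn dom φ K ∧ EndsWithUnextendableFlowW Wc Cw Fw dom φ



/-! ## Auxiliary lemmas for Theorem 4.2 (continuous-time core) -/

private lemma le_zero_of_forall_le_mul {x Cst : ℝ} (hC : 0 < Cst)
    (h : ∀ ε > (0:ℝ), x ≤ ε * Cst) : x ≤ 0 := by
  by_contra hx
  push_neg at hx
  have h2 := h (x / (2 * Cst)) (by positivity)
  rw [div_mul_eq_mul_div] at h2
  have h3 : x * Cst / (2 * Cst) = x / 2 := by
    field_simp
  rw [h3] at h2
  linarith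

/-- Continuous induction on an interval, needing only closedness from the left. -/
private lemma leftInduction {A : Set ℝ} {t₀ c : ℝ} (h₀ : t₀ ∈ A) (hc : t₀ ≤ c)
    (hclosed : ∀ T ∈ Set.Ioc t₀ c, T ∈ closure (A ∩ Set.Ico t₀ T) → T ∈ A)
    (hadv : ∀ p ∈ A, p ∈ Set.Ico t₀ c → (A ∩ Set.Ioc p c).Nonempty) : c ∈ A := by
  set B := A ∩ Set.Icc t₀ c with hB
  have hBne : B.Nonempty := ⟨t₀, h₀, le_refl _, hc⟩
  have hBbdd : BddAbove B := ⟨c, fun x hx => hx.2.2⟩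
  set T := sSup B with hT
  have hTle : T ≤ c := csSup_le hBne fun x hx => hx.2.2
  have hT0 : t₀ ≤ T := le_csSup hBbdd ⟨h₀, le_refl _, hc⟩
  have hTB : T ∈ B := by
    by_contra hTB
    have hTcl : T ∈ closure B := csSup_mem_closure hBne hBbdd
    have ht0T : t₀ < T := lt_of_le_of_ne hT0 fun h => hTB (h ▸ ⟨h₀, le_refl _, hc⟩)
    have hsub : B ⊆ A ∩ Set.Ico t₀ T := by
      intro x hx
      refine ⟨hx.1, hx.2.1, lt_of_le_of_ne (le_csSup hBbdd hx) ?_⟩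
      rintro rfl
      exact hTB hx
    have := hclosed T ⟨ht0T, hTle⟩ (closure_mono hsub hTcl)
    exact hTB ⟨this, hT0, hTle⟩
  rcases eq_or_lt_of_le hTle with h | h
  · exact h ▸ hTB.1
  · obtain ⟨y, hyA, hyT, hyc⟩ := hadv T hTB.1 ⟨hT0, h⟩
    exact absurd (le_csSup hBbdd ⟨hyA, le_trans hT0 hyT.le, hyc⟩) (not_le.mpr hyT)

private lemma continuousOn_of_AC {X : Type*} [NormedAddCommGroup X] {z : ℝ → X} {a b : ℝ}
    (hz : AbsolutelyContinuousOn z (Set.Icc a b)) : ContinuousOn z (Set.Icc a b) := by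
  intro p hp
  rw [Metric.continuousWithinAt_iff]
  intro ε hε
  obtain ⟨δ, hδ, hAC⟩ := hz ε hε
  refine ⟨δ, hδ, fun q hq hdq => ?_⟩
  have key : ∀ s t : ℝ, s ∈ Set.Icc a b → t ∈ Set.Icc a b → s ≤ t → t - s < δ →
      ‖z t - z s‖ < ε := by
    intro s t hs ht hst hlt
    have h1 := hAC 1 (fun _ => s) (fun _ => t) (fun i _ => ⟨hs, ht, hst⟩)
      (fun i hi j hj hij => by omega) (by simpa using hlt)
    simpa using h1
  rw [Real.dist_eq] at hdq
  rcases le_total q p with h | h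
  · rw [dist_eq_norm, norm_sub_rev]
    exact key q p hq hp h (by rw [abs_sub_comm] at hdq; linarith [abs_lt.mp hdq])
  · rw [dist_eq_norm]
    exact key p q hp hq h (by linarith [abs_lt.mp hdq])

private lemma nearest_mem_frontier {n : ℕ} {S : Set (E n)} (hScl : IsClosed S)
    {x ξ : E n} (hξS : ξ ∈ S) (hd : Metric.infDist x S = dist x ξ) (hx : x ∉ S) :
    ξ ∈ frontier S := by
  rw [hScl.frontier_eq]
  refine ⟨hξS, fun hint => ?_⟩
  obtain ⟨r, hr, hball⟩ := Metric.mem_nhds_iff.mp (mem_interior_iff_mem_nhds.mp hint)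
  have hd0 : 0 < dist x ξ := dist_pos.mpr fun h => hx (h ▸ hξS)
  set d := dist x ξ with hdd
  set s := min (r / 2) d with hs
  have hs0 : 0 < s := lt_min (by linarith) hd0
  have hsd : s ≤ d := min_le_right _ _
  have hnx : ‖x - ξ‖ = d := by rw [← dist_eq_norm]
  set ξ' := ξ + (s / d) • (x - ξ) with hξ'
  have h1 : dist ξ' ξ = s := by
    rw [dist_eq_norm]
    have : ξ' - ξ = (s / d) • (x - ξ) := by rw [hξ']; abel
    rw [this, norm_smul, hnx, Real.norm_eq_abs, abs_of_pos (by positivity)]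
    field_simp
  have hξ'S : ξ' ∈ S := hball (by
    rw [Metric.mem_ball, h1]
    exact lt_of_le_of_lt (min_le_left _ _) (by linarith))
  have h2 : dist x ξ' = d - s := by
    have hrw : x - ξ' = (1 - s / d) • (x - ξ) := by
      rw [hξ', sub_smul, one_smul]; abel
    rw [dist_eq_norm, hrw, norm_smul, hnx, Real.norm_eq_abs,
      abs_of_nonneg (by rw [sub_nonneg]; exact (div_le_one hd0).mpr hsd)]
    field_simp
  have h3 := Metric.infDist_le_dist_of_mem hξ'S (x := x)
  rw [hd, h2] at h3
  linarith

set_option maxHeartbeats 1000000 in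
private lemma advance_step {n : ℕ} {C K : Set (E n)}
    (hSne : (K ∩ C).Nonempty) (hScl : IsClosed (K ∩ C))
    {F : E n → Set (E n)} (hLip : SetValuedLocallyLipschitzOn F C)
    (hTan : ∀ x ∈ frontier (K ∩ C), F x ⊆ tangentCone (K ∩ C) x)
    {a b : ℝ} {z : ℝ → E n}
    (hz : AbsolutelyContinuousOn z (Set.Icc a b))
    (hzC : ∀ t ∈ Set.Icc a b, z t ∈ C)
    (hz' : ∀ᵐ t ∂(volume.restrict (Set.Icc a b)),
      ∃ v ∈ F (z t), HasDerivWithinAt z v (Set.Icc a b) t)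
    (hzcont : ContinuousOn z (Set.Icc a b))
    {u tt : ℝ} (hau : a ≤ u) (hutt : u < tt) (httb : tt ≤ b)
    (huS : z u ∈ K ∩ C) :
    ∃ c' ∈ Set.Ioc u tt, ∀ s ∈ Set.Icc u c', z s ∈ K ∩ C := by
  have hub : u ≤ b := le_trans hutt.le httb
  obtain ⟨U, hU, lam, hlam0, hlip⟩ := hLip (z u) huS.2
  obtain ⟨r₀, hr₀, hball⟩ := Metric.mem_nhds_iff.mp hU
  have hcontu : ContinuousWithinAt z (Set.Icc a b) u := hzcont u ⟨hau, hub⟩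
  obtain ⟨η, hη, hηprop⟩ := Metric.continuousWithinAt_iff.mp hcontu (r₀ / 4) (by positivity)
  set c' := min (u + η / 2) tt with hc'def
  have huc' : u < c' := lt_min (by linarith) hutt
  have hc'tt : c' ≤ tt := min_le_right _ _
  have hc'b : c' ≤ b := le_trans hc'tt httb
  have hsubab : ∀ s ∈ Set.Icc u c', s ∈ Set.Icc a b := fun s hs =>
    ⟨le_trans hau hs.1, le_trans hs.2 hc'b⟩
  have hnear : ∀ s ∈ Set.Icc u c', dist (z s) (z u) < r₀ / 4 := by
    intro s hs
    refine hηprop (hsubab s hs) ?_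
    rw [Real.dist_eq, abs_of_nonneg (by linarith [hs.1])]
    have h2 : c' ≤ u + η / 2 := min_le_left _ _
    linarith [hs.2]
  have hUmem : ∀ s ∈ Set.Icc u c', z s ∈ U := by
    intro s hs
    exact hball (by rw [Metric.mem_ball]; linarith [hnear s hs])
  refine ⟨c', ⟨huc', hc'tt⟩, ?_⟩
  have hba : (0:ℝ) ≤ b - a := by linarith
  set Cst := (2 + (b - a)) * Real.exp (lam * (b - a)) with hCst
  have hCstpos : 0 < Cst := by positivity
  have hkey : ∀ ε > (0:ℝ), ∀ s₁ ∈ Set.Icc u c',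
      Metric.infDist (z s₁) (K ∩ C) ≤ ε * Cst := by
    intro ε hε s₁ hs₁
    have hs₁b : s₁ ≤ b := le_trans hs₁.2 hc'b
    obtain ⟨δ, hδ, hAC⟩ := hz ε hε
    have hNnull : volume ({t | ¬ ∃ v ∈ F (z t), HasDerivWithinAt z v (Set.Icc a b) t}
        ∩ Set.Icc a b) = 0 := by
      have h := hz'
      rw [MeasureTheory.ae_iff] at h
      rwa [Measure.restrict_apply' measurableSet_Icc] at h
    obtain ⟨O, hNO, hOopen, hOvol⟩ := Set.exists_isOpen_lt_of_lt _ (ENNReal.ofReal δ)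
      (by rw [hNnull]; exact ENNReal.ofReal_pos.mpr hδ)
    set Fam : ℝ → Set ℝ := fun r => {xx | ∃ m : ℕ, ∃ aa bb : ℕ → ℝ,
      (∀ i < m, aa i ∈ Set.Icc u r ∧ bb i ∈ Set.Icc u r ∧ aa i ≤ bb i ∧
        Set.Icc (aa i) (bb i) ⊆ O) ∧
      (∀ i < m, ∀ j < m, i ≠ j → Disjoint (Set.Ioo (aa i) (bb i)) (Set.Ioo (aa j) (bb j))) ∧
      xx = ∑ i ∈ Finset.range m, ‖z (bb i) - z (aa i)‖} with hFamdef
    have h0mem : ∀ r, (0:ℝ) ∈ Fam r :=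
      fun r => ⟨0, (fun _ => 0), (fun _ => 0), fun i hi => absurd hi (Nat.not_lt_zero i),
        fun i hi => absurd hi (Nat.not_lt_zero i), by simp⟩
    have hbdd : ∀ r, r ≤ b → ∀ xx ∈ Fam r, xx ≤ ε := by
      intro r hrb xx hxx
      obtain ⟨m, aa, bb, hmem, hdisj, rfl⟩ := hxx
      have hend : ∀ i < m, aa i ∈ Set.Icc a b ∧ bb i ∈ Set.Icc a b ∧ aa i ≤ bb i := by
        intro i hi
        obtain ⟨h1, h2, h3, _⟩ := hmem i hi
        exact ⟨⟨le_trans hau h1.1, le_trans h1.2 hrb⟩,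
          ⟨le_trans hau h2.1, le_trans h2.2 hrb⟩, h3⟩
      have hlen : ∑ i ∈ Finset.range m, (bb i - aa i) < δ := by
        have hdisj' : (↑(Finset.range m) : Set ℕ).PairwiseDisjoint
            (fun i => Set.Ioo (aa i) (bb i)) := by
          intro i hi j hj hij
          exact hdisj i (Finset.mem_range.mp hi) j (Finset.mem_range.mp hj) hij
        have hsum : ∑ i ∈ Finset.range m, volume (Set.Ioo (aa i) (bb i))
            = volume (⋃ i ∈ Finset.range m, Set.Ioo (aa i) (bb i)) :=
          (measure_biUnion_finset hdisj' fun i _ => measurableSet_Ioo).symm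
        have hUle : volume (⋃ i ∈ Finset.range m, Set.Ioo (aa i) (bb i)) ≤ volume O := by
          apply measure_mono
          intro x hx
          simp only [Set.mem_iUnion] at hx
          obtain ⟨i, hi, hxi⟩ := hx
          exact (hmem i (Finset.mem_range.mp hi)).2.2.2 (Set.Ioo_subset_Icc_self hxi)
        have hofR : ENNReal.ofReal (∑ i ∈ Finset.range m, (bb i - aa i))
            < ENNReal.ofReal δ := by
          rw [ENNReal.ofReal_sum_of_nonneg fun i hi =>
            sub_nonneg.mpr (hmem i (Finset.mem_range.mp hi)).2.2.1]
          calc ∑ i ∈ Finset.range m, ENNReal.ofReal (bb i - aa i)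
              = ∑ i ∈ Finset.range m, volume (Set.Ioo (aa i) (bb i)) :=
                Finset.sum_congr rfl fun i hi => (Real.volume_Ioo).symm
            _ = volume (⋃ i ∈ Finset.range m, Set.Ioo (aa i) (bb i)) := hsum
            _ ≤ volume O := hUle
            _ < ENNReal.ofReal δ := hOvol
        rwa [ENNReal.ofReal_lt_ofReal_iff hδ] at hofR
      exact (hAC m aa bb hend hdisj hlen).le
    set M : ℝ → ℝ := fun r => sSup (Fam r) with hMdef
    have hFamne : ∀ r, (Fam r).Nonempty := fun r => ⟨0, h0mem r⟩
    have hFbdd : ∀ r, r ≤ b → BddAbove (Fam r) := fun r hr => ⟨ε, fun x hx => hbdd r hr x hx⟩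
    have hMle : ∀ r, r ≤ b → M r ≤ ε := fun r hr => csSup_le (hFamne r) (hbdd r hr)
    have hM0 : ∀ r, r ≤ b → 0 ≤ M r := fun r hr => le_csSup (hFbdd r hr) (h0mem r)
    have hMmono : ∀ r r', r ≤ r' → r' ≤ b → M r ≤ M r' := by
      intro r r' hrr hrb
      apply csSup_le_csSup (hFbdd r' hrb) (hFamne r)
      rintro x ⟨m, aa, bb, hmem, hdisj, rfl⟩
      refine ⟨m, aa, bb, fun i hi => ?_, hdisj, rfl⟩
      obtain ⟨h1, h2, h3, h4⟩ := hmem i hi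
      exact ⟨⟨h1.1, le_trans h1.2 hrr⟩, ⟨h2.1, le_trans h2.2 hrr⟩, h3, h4⟩
    have hMstep : ∀ p τ, u ≤ p → 0 < τ → p + τ ≤ b → Set.Icc p (p + τ) ⊆ O →
        ‖z (p + τ) - z p‖ + M p ≤ M (p + τ) := by
      intro p τ hup hτ hpb hsubO
      have key : ∀ x ∈ Fam p, x + ‖z (p + τ) - z p‖ ≤ M (p + τ) := by
        rintro x ⟨m, aa, bb, hmem, hdisj, rfl⟩
        set aa' : ℕ → ℝ := fun i => if i < m then aa i else p with haa'
        set bb' : ℕ → ℝ := fun i => if i < m then bb i else p + τ with hbb'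
        have hx' : (∑ i ∈ Finset.range m, ‖z (bb i) - z (aa i)‖) + ‖z (p + τ) - z p‖
            ∈ Fam (p + τ) := by
          refine ⟨m + 1, aa', bb', ?_, ?_, ?_⟩
          · intro i hi
            by_cases him : i < m
            · obtain ⟨h1, h2, h3, h4⟩ := hmem i him
              simp only [haa', hbb', if_pos him]
              exact ⟨⟨h1.1, by linarith [h1.2]⟩, ⟨h2.1, by linarith [h2.2]⟩, h3, h4⟩
            · simp only [haa', hbb', if_neg him]
              exact ⟨⟨hup, by linarith⟩, ⟨by linarith, le_refl _⟩, by linarith, hsubO⟩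
          · intro i hi j hj hij
            have hlt : ∀ k < m, Disjoint (Set.Ioo (aa k) (bb k)) (Set.Ioo p (p + τ)) := by
              intro k hk
              rw [Set.disjoint_left]
              intro x hx1 hx2
              have hbk : bb k ≤ p := (hmem k hk).2.1.2
              exact absurd hx1.2 (not_lt.mpr (le_trans hbk hx2.1.le))
            by_cases him : i < m
            · by_cases hjm : j < m
              · simp only [haa', hbb', if_pos him, if_pos hjm]
                exact hdisj i him j hjm hij
              · simp only [haa', hbb', if_pos him, if_neg hjm]
                exact hlt i him
            · have hjm : j < m := by omega
              simp only [haa', hbb', if_pos hjm, if_neg him]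
              exact (hlt j hjm).symm
          · rw [Finset.sum_range_succ]
            congr 1
            · exact Finset.sum_congr rfl fun i hi => by
                have him := Finset.mem_range.mp hi
                simp [haa', hbb', if_pos him]
            · simp [haa', hbb']
        exact le_csSup (hFbdd _ hpb) hx'
      have h2 : M p ≤ M (p + τ) - ‖z (p + τ) - z p‖ :=
        csSup_le (hFamne p) fun x hx => by linarith [key x hx]
      linarith
    set φ : ℝ → ℝ := fun s => (M s + ε + ε * (s - u)) * Real.exp (lam * (s - u)) with hφdef
    set A' : Set ℝ := {s | s ∈ Set.Icc u s₁ ∧ Metric.infDist (z s) (K ∩ C) ≤ φ s} with hA'def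
    have hs₁ab : ∀ s ∈ Set.Icc u s₁, s ∈ Set.Icc a b := fun s hsm =>
      ⟨le_trans hau hsm.1, le_trans hsm.2 hs₁b⟩
    have hmain : s₁ ∈ A' := by
      refine leftInduction ?_ hs₁.1 ?_ ?_
      · refine ⟨⟨le_refl u, hs₁.1⟩, ?_⟩
        rw [Metric.infDist_zero_of_mem huS]
        have h1 : 0 ≤ M u := hM0 u hub
        have h2 : 0 < Real.exp (lam * (u - u)) := Real.exp_pos _
        show (0:ℝ) ≤ (M u + ε + ε * (u - u)) * Real.exp (lam * (u - u))
        nlinarith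
      · intro T hT hTcl
        obtain ⟨x, hxmem, hxlim⟩ := mem_closure_iff_seq_limit.mp hTcl
        have hTmem : T ∈ Set.Icc u s₁ := ⟨hT.1.le, hT.2⟩
        have hTab : T ∈ Set.Icc a b := hs₁ab T hTmem
        refine ⟨hTmem, ?_⟩
        have hzx : Tendsto (fun k => Metric.infDist (z (x k)) (K ∩ C)) atTop
            (𝓝 (Metric.infDist (z T) (K ∩ C))) := by
          have h1 : Tendsto (fun k => z (x k)) atTop (𝓝 (z T)) := by
            apply (hzcont T hTab).tendsto.comp
            rw [tendsto_nhdsWithin_iff]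
            exact ⟨hxlim, Filter.Eventually.of_forall fun k => hs₁ab _ (hxmem k).1.1⟩
          exact ((Metric.continuous_infDist_pt (K ∩ C)).tendsto _).comp h1
        have hψ : Tendsto (fun k => (M T + ε + ε * (x k - u)) * Real.exp (lam * (x k - u)))
            atTop (𝓝 ((M T + ε + ε * (T - u)) * Real.exp (lam * (T - u)))) := by
          have hcont : Continuous fun r : ℝ =>
              (M T + ε + ε * (r - u)) * Real.exp (lam * (r - u)) :=
            (continuous_const.add (continuous_const.mul
              (continuous_id.sub continuous_const))).mul
              (Real.continuous_exp.comp (continuous_const.mul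
                (continuous_id.sub continuous_const)))
          exact (hcont.tendsto T).comp hxlim
        show Metric.infDist (z T) (K ∩ C) ≤ (M T + ε + ε * (T - u)) * Real.exp (lam * (T - u))
        refine le_of_tendsto_of_tendsto' hzx hψ fun k => ?_
        have h1 : Metric.infDist (z (x k)) (K ∩ C) ≤ φ (x k) := (hxmem k).1.2
        have hMk : M (x k) ≤ M T := hMmono _ _ (hxmem k).2.2.le (le_trans hTmem.2 hs₁b)
        calc Metric.infDist (z (x k)) (K ∩ C)
            ≤ (M (x k) + ε + ε * (x k - u)) * Real.exp (lam * (x k - u)) := h1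
          _ ≤ (M T + ε + ε * (x k - u)) * Real.exp (lam * (x k - u)) :=
              mul_le_mul_of_nonneg_right (by linarith) (Real.exp_nonneg _)
      · rintro p ⟨hpIcc, hpφ⟩ hpIco
        have hps₁ : p < s₁ := hpIco.2
        have hpab : p ∈ Set.Icc a b := hs₁ab p hpIcc
        have hpb : p < b := lt_of_lt_of_le hps₁ hs₁b
        have hpc' : p ∈ Set.Icc u c' := ⟨hpIcc.1, le_trans hpIcc.2 hs₁.2⟩
        by_cases hpO : p ∈ O
        · obtain ⟨ρ, hρ, hballO⟩ := Metric.isOpen_iff.mp hOopen p hpO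
          set τ := min (ρ / 2) (s₁ - p) with hτdef
          have hτpos : 0 < τ := lt_min (by linarith) (by linarith)
          have hpτs₁ : p + τ ≤ s₁ := by
            have := min_le_right (ρ / 2) (s₁ - p); linarith
          have hsubO : Set.Icc p (p + τ) ⊆ O := by
            intro q hq
            apply hballO
            rw [Metric.mem_ball, Real.dist_eq, abs_of_nonneg (by linarith [hq.1])]
            have := min_le_left (ρ / 2) (s₁ - p)
            linarith [hq.2]
          have hstep := hMstep p τ hpIcc.1 hτpos (by linarith) hsubO
          refine ⟨p + τ, ⟨⟨by linarith [hpIcc.1], hpτs₁⟩, ?_⟩, by linarith, hpτs₁⟩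
          have h1 : Metric.infDist (z (p + τ)) (K ∩ C)
              ≤ Metric.infDist (z p) (K ∩ C) + ‖z (p + τ) - z p‖ := by
            have h2 := Metric.infDist_le_infDist_add_dist (x := z (p + τ)) (y := z p)
              (s := K ∩ C)
            rwa [dist_eq_norm] at h2
          have hMp0 : 0 ≤ M p := hM0 p hpb.le
          have hMmp : M p ≤ M (p + τ) := hMmono _ _ (by linarith) (by linarith)
          have hpu : (0:ℝ) ≤ p - u := by linarith [hpIcc.1]
          have hE1 : (1:ℝ) ≤ Real.exp (lam * (p - u)) :=
            Real.one_le_exp (mul_nonneg hlam0 hpu)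
          have hEE : Real.exp (lam * (p - u)) ≤ Real.exp (lam * (p + τ - u)) :=
            Real.exp_le_exp.mpr (by nlinarith)
          have h3 : ‖z (p + τ) - z p‖ ≤ M (p + τ) - M p := by linarith
          show Metric.infDist (z (p + τ)) (K ∩ C)
              ≤ (M (p + τ) + ε + ε * (p + τ - u)) * Real.exp (lam * (p + τ - u))
          have hφp : Metric.infDist (z p) (K ∩ C)
              ≤ (M p + ε + ε * (p - u)) * Real.exp (lam * (p - u)) := hpφ
          have hB1 : (M (p + τ) + ε + ε * (p - u)) * Real.exp (lam * (p - u))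
              ≤ (M (p + τ) + ε + ε * (p + τ - u)) * Real.exp (lam * (p + τ - u)) := by
            refine mul_le_mul (by nlinarith [mul_nonneg hε.le hτpos.le]) hEE
              (Real.exp_nonneg _) (by nlinarith [mul_nonneg hε.le hpu])
          nlinarith [mul_nonneg (sub_nonneg.mpr hMmp) (sub_nonneg.mpr hE1)]
        · have hP : ∃ v ∈ F (z p), HasDerivWithinAt z v (Set.Icc a b) p := by
            by_contra hcon
            exact hpO (hNO ⟨hcon, hpab⟩)
          obtain ⟨v, hvF, hvd⟩ := hP
          have hgg0 : 0 ≤ Metric.infDist (z p) (K ∩ C) := Metric.infDist_nonneg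
          have hmap : Tendsto (fun τ : ℝ => p + τ) (𝓝[>] (0:ℝ)) (𝓝[>] p) := by
            rw [tendsto_nhdsWithin_iff]
            constructor
            · have h3 : Continuous (fun τ : ℝ => p + τ) := continuous_const.add continuous_id
              have h2 : Tendsto (fun τ : ℝ => p + τ) (𝓝 0) (𝓝 p) := by
                simpa using h3.tendsto (0:ℝ)
              exact h2.mono_left nhdsWithin_le_nhds
            · filter_upwards [self_mem_nhdsWithin] with τ hτ
              simp only [Set.mem_Ioi] at hτ ⊢
              linarith
          have hnle : 𝓝[>] p ≤ 𝓝[Set.Icc a b] p := by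
            rw [nhdsWithin_le_iff, mem_nhdsWithin]
            exact ⟨Set.Iio b, isOpen_Iio, hpb, fun q hq => ⟨le_trans hpab.1 hq.2.le, hq.1.le⟩⟩
          have hev1 : ∀ᶠ τ in 𝓝[>] (0:ℝ), ‖z (p + τ) - z p - τ • v‖ ≤ ε / 2 * τ := by
            have hlo := (hasDerivWithinAt_iff_isLittleO.mp hvd).mono hnle
            have hb2 := Asymptotics.IsLittleO.def hlo (show (0:ℝ) < ε / 2 by positivity)
            have hb3 := hmap.eventually hb2
            filter_upwards [hb3, self_mem_nhdsWithin] with τ hτ hτ0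
            simp only [Set.mem_Ioi] at hτ0
            simp only [add_sub_cancel_left] at hτ
            rwa [Real.norm_eq_abs, abs_of_pos hτ0] at hτ
          have hev2 : ∀ᶠ τ in 𝓝[>] (0:ℝ), p + τ ≤ s₁ := by
            filter_upwards [Ioc_mem_nhdsGT_of_mem
              (⟨le_refl (0:ℝ), by linarith⟩ : (0:ℝ) ∈ Set.Ico 0 (s₁ - p))] with τ hτ
            linarith [hτ.2]
          have hev0 : ∀ᶠ τ in 𝓝[>] (0:ℝ), 0 < τ := by
            filter_upwards [self_mem_nhdsWithin] with τ hτ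
            exact hτ
          have hkey2 : ∃ τ, 0 < τ ∧ p + τ ≤ s₁ ∧ Metric.infDist (z (p + τ)) (K ∩ C)
              ≤ Metric.infDist (z p) (K ∩ C)
                + τ * (lam * Metric.infDist (z p) (K ∩ C) + ε) := by
            have hcommon : ∀ ξ w, ξ ∈ K ∩ C → ξ ∈ frontier (K ∩ C) → w ∈ F ξ →
                dist (z p) ξ = Metric.infDist (z p) (K ∩ C) →
                ‖v - w‖ ≤ lam * Metric.infDist (z p) (K ∩ C) →
                ∃ τ, 0 < τ ∧ p + τ ≤ s₁ ∧ Metric.infDist (z (p + τ)) (K ∩ C)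
                  ≤ Metric.infDist (z p) (K ∩ C)
                    + τ * (lam * Metric.infDist (z p) (K ∩ C) + ε) := by
              intro ξ w hξS hξfr hwF hdξ hvw
              have htc : w ∈ tangentCone (K ∩ C) ξ := hTan ξ hξfr hwF
              have hliminf : Filter.liminf
                  (fun τ : ℝ => Metric.infDist (ξ + τ • w) (K ∩ C) / τ)
                  (𝓝[>] (0:ℝ)) = 0 := htc
              have hbound : Filter.IsBoundedUnder (· ≤ ·) (𝓝[>] (0:ℝ))
                  (fun τ : ℝ => Metric.infDist (ξ + τ • w) (K ∩ C) / τ) := by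
                refine ⟨‖w‖, ?_⟩
                rw [Filter.eventually_map]
                filter_upwards [self_mem_nhdsWithin] with τ hτ
                simp only [Set.mem_Ioi] at hτ
                have h6 : Metric.infDist (ξ + τ • w) (K ∩ C) ≤ τ * ‖w‖ := by
                  have h7 := Metric.infDist_le_dist_of_mem (x := ξ + τ • w) hξS
                  calc Metric.infDist (ξ + τ • w) (K ∩ C) ≤ dist (ξ + τ • w) ξ := h7
                    _ = τ * ‖w‖ := by
                        rw [dist_eq_norm]
                        simp only [add_sub_cancel_left]
                        rw [norm_smul, Real.norm_eq_abs, abs_of_pos hτ]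
                exact (div_le_iff₀ hτ).mpr (by nlinarith [h6])
              have hfreq : ∃ᶠ τ in 𝓝[>] (0:ℝ),
                  Metric.infDist (ξ + τ • w) (K ∩ C) / τ < ε / 2 :=
                frequently_lt_of_liminf_lt hbound.isCoboundedUnder_ge
                  (by rw [hliminf]; positivity)
              obtain ⟨τ, hlt, ⟨hτ1, hτ2⟩, hτ0⟩ :=
                (hfreq.and_eventually ((hev1.and hev2).and hev0)).exists
              refine ⟨τ, hτ0, hτ2, ?_⟩
              have hA1 := Metric.infDist_le_infDist_add_dist (x := z (p + τ))
                (y := ξ + τ • w) (s := K ∩ C)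
              have hB2 : Metric.infDist (ξ + τ • w) (K ∩ C) < ε / 2 * τ := by
                rw [div_lt_iff₀ hτ0] at hlt
                linarith
              have hC2 : dist (z (p + τ)) (ξ + τ • w)
                  ≤ ε / 2 * τ + Metric.infDist (z p) (K ∩ C)
                    + τ * (lam * Metric.infDist (z p) (K ∩ C)) := by
                rw [dist_eq_norm]
                have hrw : z (p + τ) - (ξ + τ • w)
                    = (z (p + τ) - z p - τ • v) + (z p - ξ) + τ • (v - w) := by
                  rw [smul_sub]; abel
                rw [hrw]
                have e1 : ‖z p - ξ‖ = Metric.infDist (z p) (K ∩ C) := by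
                  rw [← dist_eq_norm]; exact hdξ
                have e2 : ‖τ • (v - w)‖ = τ * ‖v - w‖ := by
                  rw [norm_smul, Real.norm_eq_abs, abs_of_pos hτ0]
                have e3 : τ * ‖v - w‖ ≤ τ * (lam * Metric.infDist (z p) (K ∩ C)) :=
                  mul_le_mul_of_nonneg_left hvw hτ0.le
                calc ‖z (p + τ) - z p - τ • v + (z p - ξ) + τ • (v - w)‖
                    ≤ ‖z (p + τ) - z p - τ • v‖ + ‖z p - ξ‖ + ‖τ • (v - w)‖ := norm_add₃_le
                  _ ≤ ε / 2 * τ + Metric.infDist (z p) (K ∩ C)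
                      + τ * (lam * Metric.infDist (z p) (K ∩ C)) := by
                      linarith [hτ1, e1, e2, e3]
              nlinarith [hA1, hB2, hC2]
            by_cases hintS : z p ∈ interior (K ∩ C)
            · have hev3 : ∀ᶠ τ in 𝓝[>] (0:ℝ), z (p + τ) ∈ K ∩ C := by
                have h5 : ∀ᶠ s in 𝓝[Set.Icc a b] p, z s ∈ interior (K ∩ C) :=
                  (hzcont p hpab).eventually (isOpen_interior.mem_nhds hintS)
                have h6 := hmap.eventually (h5.filter_mono hnle)
                filter_upwards [h6] with τ hτ using interior_subset hτ
              obtain ⟨τ, hτ3, hτ2, hτ0⟩ := (hev3.and (hev2.and hev0)).exists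
              refine ⟨τ, hτ0, hτ2, ?_⟩
              rw [Metric.infDist_zero_of_mem hτ3]
              have h7 : 0 ≤ τ * (lam * Metric.infDist (z p) (K ∩ C) + ε) :=
                mul_nonneg hτ0.le (add_nonneg (mul_nonneg hlam0 hgg0) hε.le)
              linarith
            · by_cases hpS : z p ∈ K ∩ C
              · have hfr : z p ∈ frontier (K ∩ C) := by
                  rw [hScl.frontier_eq]; exact ⟨hpS, hintS⟩
                refine hcommon (z p) v hpS hfr hvF ?_ ?_
                · rw [Metric.infDist_zero_of_mem hpS, dist_self]
                · rw [sub_self, norm_zero]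
                  exact mul_nonneg hlam0 hgg0
              · obtain ⟨ξ, hξS, hdeq⟩ := hScl.exists_infDist_eq_dist hSne (z p)
                have hfr : ξ ∈ frontier (K ∩ C) := nearest_mem_frontier hScl hξS hdeq hpS
                have hzpU : z p ∈ U := hUmem p hpc'
                have hξU : ξ ∈ U := by
                  apply hball
                  rw [Metric.mem_ball]
                  have h8 : dist ξ (z u) ≤ dist ξ (z p) + dist (z p) (z u) :=
                    dist_triangle _ _ _
                  have h9 : dist ξ (z p) = Metric.infDist (z p) (K ∩ C) := by
                    rw [dist_comm]; exact hdeq.symm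
                  have h10 : Metric.infDist (z p) (K ∩ C) ≤ dist (z p) (z u) :=
                    Metric.infDist_le_dist_of_mem huS
                  linarith [hnear p hpc']
                obtain ⟨w, hwF, hnw⟩ := hlip (z p) ⟨hzpU, hzC p hpab⟩ ξ ⟨hξU, hξS.2⟩ v hvF
                refine hcommon ξ w hξS hfr hwF hdeq.symm ?_
                calc ‖v - w‖ ≤ lam * ‖z p - ξ‖ := hnw
                  _ = lam * Metric.infDist (z p) (K ∩ C) := by
                      rw [← dist_eq_norm, ← hdeq]
          obtain ⟨τ, hτ0, hτs₁, hineq⟩ := hkey2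
          refine ⟨p + τ, ⟨⟨by linarith [hpIcc.1], hτs₁⟩, ?_⟩, by linarith, hτs₁⟩
          show Metric.infDist (z (p + τ)) (K ∩ C)
              ≤ (M (p + τ) + ε + ε * (p + τ - u)) * Real.exp (lam * (p + τ - u))
          have hφp : Metric.infDist (z p) (K ∩ C)
              ≤ (M p + ε + ε * (p - u)) * Real.exp (lam * (p - u)) := hpφ
          have hMp0 : 0 ≤ M p := hM0 p hpb.le
          have hMm : M p ≤ M (p + τ) := hMmono _ _ (by linarith) (by linarith)
          have hpu : (0:ℝ) ≤ p - u := by linarith [hpIcc.1]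
          have hE1 : (1:ℝ) ≤ Real.exp (lam * (p - u)) :=
            Real.one_le_exp (mul_nonneg hlam0 hpu)
          have hX : lam * τ + 1 ≤ Real.exp (lam * τ) := Real.add_one_le_exp _
          have hEX : Real.exp (lam * (p + τ - u))
              = Real.exp (lam * (p - u)) * Real.exp (lam * τ) := by
            rw [← Real.exp_add]
            congr 1
            ring
          rw [hEX]
          set E := Real.exp (lam * (p - u)) with hEdef
          set X := Real.exp (lam * τ) with hXdef
          have hE0 : (0:ℝ) < E := Real.exp_pos _
          have hX0 : (0:ℝ) < X := Real.exp_pos _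
          have hC0 : (0:ℝ) ≤ M p + ε + ε * (p - u) + ε * τ := by
            nlinarith [mul_nonneg hε.le hpu, mul_nonneg hε.le hτ0.le]
          have step1 : (M p + ε + ε * (p - u) + ε * τ) * (E * X)
              ≤ (M (p + τ) + ε + ε * (p + τ - u)) * (E * X) := by
            refine mul_le_mul_of_nonneg_right ?_ (by positivity)
            nlinarith [hMm]
          have step2 : (M p + ε + ε * (p - u) + ε * τ) * E * (lam * τ + 1)
              ≤ (M p + ε + ε * (p - u) + ε * τ) * E * X :=
            mul_le_mul_of_nonneg_left hX (mul_nonneg hC0 hE0.le)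
          have h1lam : (0:ℝ) ≤ lam * τ + 1 := by nlinarith [mul_nonneg hlam0 hτ0.le]
          have step3 : Metric.infDist (z p) (K ∩ C)
              + τ * (lam * Metric.infDist (z p) (K ∩ C) + ε)
              ≤ (M p + ε + ε * (p - u) + ε * τ) * E * (lam * τ + 1) := by
            have hEbig : (1:ℝ) ≤ E * (lam * τ + 1) := by
              nlinarith [mul_nonneg hlam0 hτ0.le]
            nlinarith [mul_le_mul_of_nonneg_right hφp h1lam,
              mul_nonneg (mul_nonneg hε.le hτ0.le)
                (by linarith : (0:ℝ) ≤ E * (lam * τ + 1) - 1)]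
          calc Metric.infDist (z (p + τ)) (K ∩ C)
              ≤ Metric.infDist (z p) (K ∩ C)
                + τ * (lam * Metric.infDist (z p) (K ∩ C) + ε) := hineq
            _ ≤ (M p + ε + ε * (p - u) + ε * τ) * E * (lam * τ + 1) := step3
            _ ≤ (M p + ε + ε * (p - u) + ε * τ) * E * X := step2
            _ = (M p + ε + ε * (p - u) + ε * τ) * (E * X) := by ring
            _ ≤ (M (p + τ) + ε + ε * (p + τ - u)) * (E * X) := step1
    have hgs₁ : Metric.infDist (z s₁) (K ∩ C) ≤ φ s₁ := hmain.2
    have h1 : M s₁ ≤ ε := hMle s₁ hs₁b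
    have h2 : s₁ - u ≤ b - a := by linarith [hs₁.1]
    have h3 : Real.exp (lam * (s₁ - u)) ≤ Real.exp (lam * (b - a)) :=
      Real.exp_le_exp.mpr (mul_le_mul_of_nonneg_left h2 hlam0)
    have h6 : ε * (s₁ - u) ≤ ε * (b - a) := mul_le_mul_of_nonneg_left h2 hε.le
    have h5 : 0 ≤ M s₁ := hM0 s₁ hs₁b
    have h4 : (0:ℝ) ≤ s₁ - u := by linarith [hs₁.1]
    calc Metric.infDist (z s₁) (K ∩ C)
        ≤ (M s₁ + ε + ε * (s₁ - u)) * Real.exp (lam * (s₁ - u)) := hgs₁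
      _ ≤ (ε + ε + ε * (b - a)) * Real.exp (lam * (b - a)) := by
          refine mul_le_mul (by linarith) h3 (Real.exp_nonneg _) ?_
          have h7 : 0 ≤ ε * (b - a) := mul_nonneg hε.le hba
          linarith
      _ = ε * Cst := by rw [hCst]; ring
  intro s hs
  have h0 : 0 ≤ Metric.infDist (z s) (K ∩ C) := Metric.infDist_nonneg
  have h1 : Metric.infDist (z s) (K ∩ C) ≤ 0 :=
    le_zero_of_forall_le_mul hCstpos fun ε hε => hkey ε hε s hs
  exact (hScl.mem_iff_infDist_zero hSne).mpr (le_antisymm h1 h0)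

/-- Flow invariance of a closed set under a locally Lipschitz differential inclusion with
subtangential values (continuous-time core of the proof of Theorem 4.2). -/
theorem flow_invariance_subtangential {n : ℕ} (C K : Set (E n))
    (hC : IsClosed C)
    (hSne : (K ∩ C).Nonempty) (hScl : IsClosed (K ∩ C))
    (F : E n → Set (E n))
    (hLip : SetValuedLocallyLipschitzOn F C)
    (hTan : ∀ x ∈ frontier (K ∩ C), F x ⊆ tangentCone (K ∩ C) x)
    (a b : ℝ) (z : ℝ → E n)
    (hz : AbsolutelyContinuousOn z (Set.Icc a b))
    (hzC : ∀ t ∈ Set.Icc a b, z t ∈ C)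
    (hz' : ∀ᵐ t ∂(volume.restrict (Set.Icc a b)),
      ∃ v ∈ F (z t), HasDerivWithinAt z v (Set.Icc a b) t)
    (hza : z a ∈ K ∩ C) :
    ∀ t ∈ Set.Icc a b, z t ∈ K ∩ C := by
  have hzcont : ContinuousOn z (Set.Icc a b) := continuousOn_of_AC hz
  intro t ht
  have hab : a ≤ b := le_trans ht.1 ht.2
  suffices h : t ∈ {s : ℝ | s ∈ Set.Icc a b ∧ z s ∈ K ∩ C} from h.2
  refine leftInduction (t₀ := a) ⟨⟨le_refl a, hab⟩, hza⟩ ht.1 ?_ ?_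
  · intro T hT hTcl
    obtain ⟨x, hxmem, hxlim⟩ := mem_closure_iff_seq_limit.mp hTcl
    have hTab : T ∈ Set.Icc a b := ⟨hT.1.le, le_trans hT.2 ht.2⟩
    refine ⟨hTab, ?_⟩
    have hzx : Tendsto (fun k => z (x k)) atTop (𝓝 (z T)) := by
      apply (hzcont T hTab).tendsto.comp
      rw [tendsto_nhdsWithin_iff]
      exact ⟨hxlim, Filter.Eventually.of_forall fun k => (hxmem k).1.1⟩
    exact hScl.mem_of_tendsto hzx (Filter.Eventually.of_forall fun k => (hxmem k).1.2)
  · rintro p ⟨hpab, hpS⟩ hpIco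
    obtain ⟨c', hc'I, hc'S⟩ := advance_step hSne hScl hLip hTan hz hzC hz' hzcont
      hpab.1 hpIco.2 ht.2 hpS
    exact ⟨c', ⟨⟨le_trans hpab.1 hc'I.1.le, le_trans hc'I.2 ht.2⟩,
      hc'S c' ⟨hc'I.1.le, le_refl _⟩⟩, hc'I⟩


end Hybrid
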